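/- Let G be a graph with m edges and unit Perron–Frobenius eigenvector x. Then Σ_{i,j ∈ V(G)} |N(i) ∩ N(j)| · x_i² x_j² ≥ λ(G)³/(2m), where the sum includes i = j with |N(i) ∩ N(i)| = d_i. -/

import Mathlib

open Finset Matrix

lemma rayleigh' {V : Type*} [Fintype V] [DecidableEq V] (A : Matrix V V ℝ)
    (hA : A.IsHermitian) (lam : ℝ)
    (hmax : ∀ μ : ℝ, (∃ x : V → ℝ, x ≠ 0 ∧ A *ᵥ x = μ • x) → μ ≤ lam)
    (v : V → ℝ) : v ⬝ᵥ (A *ᵥ v) ≤ lam * (v ⬝ᵥ v) := by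
  classical
  have hBh : (lam • (1 : Matrix V V ℝ) - A).IsHermitian := by
    unfold Matrix.IsHermitian at *
    simp [conjTranspose_smul, hA]
    rw [← conjTranspose_eq_transpose_of_trivial]; exact hA
  have hBps : (lam • (1 : Matrix V V ℝ) - A).PosSemidef := by
    apply (Matrix.IsHermitian.posSemidef_iff_eigenvalues_nonneg hBh).mpr
    intro i
    show (0:ℝ) ≤ hBh.eigenvalues i
    have he := hBh.mulVec_eigenvectorBasis i
    set e : V → ℝ := ⇑(hBh.eigenvectorBasis i) with hedef
    have hne : e ≠ 0 := fun h =>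
      hBh.eigenvectorBasis.orthonormal.ne_zero i (by ext k; exact congrFun h k)
    have he2 : lam • e - A *ᵥ e = hBh.eigenvalues i • e := by
      rw [← he, sub_mulVec, smul_mulVec, one_mulVec]
    have hAe : A *ᵥ e = (lam - hBh.eigenvalues i) • e := by
      have h3 := congrArg (fun w => lam • e - w) he2
      simpa [sub_sub_cancel, sub_smul] using h3
    have := hmax _ ⟨_, hne, hAe⟩
    linarith
  have h0 := hBps.dotProduct_mulVec_nonneg v
  have heq : star v ⬝ᵥ ((lam • (1 : Matrix V V ℝ) - A) *ᵥ v) =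
      lam * (v ⬝ᵥ v) - v ⬝ᵥ (A *ᵥ v) := by
    rw [sub_mulVec, smul_mulVec, one_mulVec, dotProduct_sub, dotProduct_smul]
    simp [star_trivial, smul_eq_mul]
  rw [heq] at h0
  linarith


/-- `lam` is the largest adjacency eigenvalue (spectral radius) of `G`. -/
def IsSpectralRadius {V : Type*} [Fintype V] [DecidableEq V] (G : SimpleGraph V)
    [DecidableRel G.Adj] (lam : ℝ) : Prop :=
  (∃ x : V → ℝ, x ≠ 0 ∧ (G.adjMatrix ℝ) *ᵥ x = lam • x) ∧
  ∀ μ : ℝ, (∃ x : V → ℝ, x ≠ 0 ∧ (G.adjMatrix ℝ) *ᵥ x = μ • x) → μ ≤ lam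

set_option maxHeartbeats 1000000 in
/-- Codegree–Perron inequality: `Σ_{i,j} |N(i)∩N(j)| xᵢ²xⱼ² ≥ λ³/(2m)`. -/
theorem stmt_15 {V : Type*} [Fintype V] [DecidableEq V] (G : SimpleGraph V)
    [DecidableRel G.Adj] (lam : ℝ) (hlam : IsSpectralRadius G lam)
    (x : V → ℝ) (hx0 : ∀ w, 0 ≤ x w) (hxunit : ∑ w, x w ^ 2 = 1)
    (hxeig : (G.adjMatrix ℝ) *ᵥ x = lam • x)
    (hm : 0 < G.edgeFinset.card) :
    lam ^ 3 / (2 * (G.edgeFinset.card : ℝ)) ≤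
      ∑ i : V, ∑ j : V,
        ((G.neighborFinset i ∩ G.neighborFinset j).card : ℝ) * x i ^ 2 * x j ^ 2 := by
  classical
  have hRHS0 : 0 ≤ ∑ i : V, ∑ j : V,
      ((G.neighborFinset i ∩ G.neighborFinset j).card : ℝ) * x i ^ 2 * x j ^ 2 := by
    apply Finset.sum_nonneg; intro i _; apply Finset.sum_nonneg; intro j _
    positivity
  have hm' : (0:ℝ) < 2 * (G.edgeFinset.card : ℝ) := by positivity
  rcases le_or_gt lam 0 with hl | hl
  · refine le_trans ?_ hRHS0
    apply div_nonpos_of_nonpos_of_nonneg _ hm'.le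
    exact Odd.pow_nonpos (by decide) hl
  -- notation
  set d : V → ℝ := fun k => (G.degree k : ℝ) with hd
  set y : V → ℝ := fun k => ∑ j ∈ G.neighborFinset k, x j ^ 2 with hy
  have hy0 : ∀ k, 0 ≤ y k := fun k => Finset.sum_nonneg fun j _ => sq_nonneg _
  have hAx : ∀ k, ∑ j ∈ G.neighborFinset k, x j = lam * x k := by
    intro k
    have := congrFun hxeig k
    rwa [SimpleGraph.adjMatrix_mulVec_apply, Pi.smul_apply, smul_eq_mul] at this
  have hdeg : ∀ {k j : V}, G.Adj k j → (1:ℝ) ≤ d k := by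
    intro k j h
    simp only [hd, Nat.one_le_cast]
    exact (G.degree_pos_iff_exists_adj k).2 ⟨j, h⟩
  -- swap lemma
  have hswap : ∀ (F : V → V → ℝ), ∑ k, ∑ j ∈ G.neighborFinset k, F k j
      = ∑ k, ∑ j ∈ G.neighborFinset k, F j k := by
    intro F
    simp_rw [SimpleGraph.neighborFinset_eq_filter, Finset.sum_filter]
    rw [Finset.sum_comm]
    refine Finset.sum_congr rfl fun k _ => Finset.sum_congr rfl fun j _ => ?_
    by_cases h : G.Adj k j <;> simp [h, SimpleGraph.adj_comm]
  -- pairs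
  set E' : Finset (V × V) := Finset.univ.filter (fun p => G.Adj p.1 p.2) with hE'
  have hpair : ∀ (F : V → V → ℝ), ∑ p ∈ E', F p.1 p.2
      = ∑ k, ∑ j ∈ G.neighborFinset k, F k j := by
    intro F
    rw [hE', Finset.sum_filter, ← Finset.univ_product_univ, Finset.sum_product]
    simp_rw [SimpleGraph.neighborFinset_eq_filter, Finset.sum_filter]
  -- step 1 : RHS = ∑ k, y k ^ 2
  set p : V → V → ℝ := fun i k => if G.Adj i k then x i ^ 2 else 0 with hp
  have hyk : ∀ k, y k = ∑ i, p i k := by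
    intro k
    rw [hy]
    simp only [SimpleGraph.neighborFinset_eq_filter, Finset.sum_filter]
    exact Finset.sum_congr rfl fun i _ => by rw [hp]; simp [SimpleGraph.adj_comm]
  have hS : ∑ i : V, ∑ j : V,
      ((G.neighborFinset i ∩ G.neighborFinset j).card : ℝ) * x i ^ 2 * x j ^ 2
      = ∑ k, y k ^ 2 := by
    have hcard : ∀ i j : V, ((G.neighborFinset i ∩ G.neighborFinset j).card : ℝ)
        * x i ^ 2 * x j ^ 2 = ∑ k, p i k * p j k := by
      intro i j
      have h1 : ∀ k : V, p i k * p j k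
          = if k ∈ G.neighborFinset i ∩ G.neighborFinset j then x i ^ 2 * x j ^ 2 else 0 := by
        intro k
        simp only [hp, Finset.mem_inter, SimpleGraph.mem_neighborFinset]
        by_cases h1 : G.Adj i k <;> by_cases h2 : G.Adj j k <;> simp [h1, h2]
      rw [Finset.sum_congr rfl fun k _ => h1 k, Finset.sum_ite_mem, Finset.univ_inter,
        Finset.sum_const, nsmul_eq_mul]
      ring
    calc ∑ i : V, ∑ j : V, ((G.neighborFinset i ∩ G.neighborFinset j).card : ℝ)
          * x i ^ 2 * x j ^ 2
        = ∑ i : V, ∑ j : V, ∑ k : V, p i k * p j k :=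
          Finset.sum_congr rfl fun i _ => Finset.sum_congr rfl fun j _ => hcard i j
      _ = ∑ i : V, ∑ k : V, ∑ j : V, p i k * p j k :=
          Finset.sum_congr rfl fun i _ => Finset.sum_comm
      _ = ∑ k : V, ∑ i : V, ∑ j : V, p i k * p j k := Finset.sum_comm
      _ = ∑ k, y k ^ 2 := by
          refine Finset.sum_congr rfl fun k _ => ?_
          rw [hyk k, sq, Finset.sum_mul_sum]
  -- Cauchy-Schwarz per vertex: (lam * x k)^2 ≤ d k * y k
  have hCS1 : ∀ k, (lam * x k) ^ 2 ≤ d k * y k := by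
    intro k
    rw [← hAx k]
    have := Finset.sum_mul_sq_le_sq_mul_sq (G.neighborFinset k) (fun _ => (1:ℝ)) x
    simpa [hy, hd, SimpleGraph.card_neighborFinset_eq_degree] using this
  -- step: ∑ y² ≥ lam² * P
  set P : ℝ := ∑ k, ∑ j ∈ G.neighborFinset k, x k ^ 2 * x j ^ 2 / d k with hP
  have hT : lam ^ 2 * P ≤ ∑ k, y k ^ 2 := by
    rw [hP, Finset.mul_sum]
    apply Finset.sum_le_sum
    intro k _
    rcases Finset.eq_empty_or_nonempty (G.neighborFinset k) with he | ⟨j, hj⟩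
    · rw [he]
      simp [sq_nonneg]
    · have hadj : G.Adj k j := by rwa [SimpleGraph.mem_neighborFinset] at hj
      have hdk : (1:ℝ) ≤ d k := hdeg hadj
      have hdk0 : (0:ℝ) < d k := by linarith
      have h1 : ∑ j ∈ G.neighborFinset k, x k ^ 2 * x j ^ 2 / d k
          = (x k ^ 2 / d k) * y k := by
        rw [hy, Finset.mul_sum]
        exact Finset.sum_congr rfl fun j _ => by ring
      rw [h1]
      have h2 : lam ^ 2 * x k ^ 2 / d k ≤ y k := by
        rw [div_le_iff₀ hdk0]
        nlinarith [hCS1 k]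
      calc lam ^ 2 * ((x k ^ 2 / d k) * y k) = (lam ^ 2 * x k ^ 2 / d k) * y k := by ring
        _ ≤ y k * y k := mul_le_mul_of_nonneg_right h2 (hy0 k)
        _ = y k ^ 2 := (sq (y k)).symm
  -- U : symmetrized sum
  set U : ℝ := ∑ k, ∑ j ∈ G.neighborFinset k, x k ^ 2 * x j ^ 2 / Real.sqrt (d k * d j)
    with hUdef
  have hU0 : 0 ≤ U := by
    rw [hUdef]
    apply Finset.sum_nonneg; intro k _; apply Finset.sum_nonneg; intro j _
    apply div_nonneg (by positivity) (Real.sqrt_nonneg _)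
  have hUP : U ≤ P := by
    have h2P : P + P = ∑ k, ∑ j ∈ G.neighborFinset k,
        (x k ^ 2 * x j ^ 2 / d k + x k ^ 2 * x j ^ 2 / d j) := by
      rw [hP]
      nth_rewrite 2 [hswap (fun k j => x k ^ 2 * x j ^ 2 / d k)]
      rw [← Finset.sum_add_distrib]
      refine Finset.sum_congr rfl fun k _ => ?_
      rw [← Finset.sum_add_distrib]
      exact Finset.sum_congr rfl fun j _ => by ring
    have hptwise : ∀ k, ∀ j ∈ G.neighborFinset k,
        2 * (x k ^ 2 * x j ^ 2 / Real.sqrt (d k * d j))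
        ≤ x k ^ 2 * x j ^ 2 / d k + x k ^ 2 * x j ^ 2 / d j := by
      intro k j hj
      have hadj : G.Adj k j := by rwa [SimpleGraph.mem_neighborFinset] at hj
      have ha : (1:ℝ) ≤ d k := hdeg hadj
      have hb : (1:ℝ) ≤ d j := hdeg hadj.symm
      have hdk0 : (0:ℝ) < d k := by linarith
      have hdj0 : (0:ℝ) < d j := by linarith
      have hc : (0:ℝ) ≤ x k ^ 2 * x j ^ 2 := by positivity
      have hs0 : 0 < Real.sqrt (d k * d j) := Real.sqrt_pos.mpr (by positivity)
      have hss : Real.sqrt (d k * d j) * Real.sqrt (d k * d j) = d k * d j :=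
        Real.mul_self_sqrt (by positivity)
      have hsplit : Real.sqrt (d k * d j) = Real.sqrt (d k) * Real.sqrt (d j) :=
        Real.sqrt_mul (by linarith) _
      have h2s : 2 * Real.sqrt (d k * d j) ≤ d k + d j := by
        rw [hsplit]
        nlinarith [sq_nonneg (Real.sqrt (d k) - Real.sqrt (d j)),
          Real.sq_sqrt (le_of_lt hdk0), Real.sq_sqrt (le_of_lt hdj0)]
      rw [div_add_div _ _ (ne_of_gt hdk0) (ne_of_gt hdj0), ← mul_div_assoc,
        div_le_div_iff₀ hs0 (mul_pos hdk0 hdj0)]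
      nlinarith [mul_le_mul_of_nonneg_right h2s (mul_nonneg hc hs0.le), hss]
    have : 2 * U ≤ P + P := by
      rw [h2P, hUdef, Finset.mul_sum]
      apply Finset.sum_le_sum
      intro k _
      rw [Finset.mul_sum]
      exact Finset.sum_le_sum fun j hj => hptwise k j hj
    linarith
  -- L = lam
  have hL : ∑ k, ∑ j ∈ G.neighborFinset k, x k * x j = lam := by
    calc ∑ k, ∑ j ∈ G.neighborFinset k, x k * x j
        = ∑ k, x k * (lam * x k) := by
          refine Finset.sum_congr rfl fun k _ => ?_
          rw [← Finset.mul_sum, hAx k]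
      _ = lam * ∑ k, x k ^ 2 := by rw [Finset.mul_sum]; exact Finset.sum_congr rfl fun k _ => by ring
      _ = lam := by rw [hxunit, mul_one]
  -- W ≤ lam * 2m
  have hAherm : (G.adjMatrix ℝ).IsHermitian := by
    rw [Matrix.IsHermitian, Matrix.conjTranspose_eq_transpose_of_trivial]
    exact G.isSymm_adjMatrix
  have hW : ∑ k, ∑ j ∈ G.neighborFinset k, Real.sqrt (d k * d j)
      ≤ lam * (2 * (G.edgeFinset.card : ℝ)) := by
    have hray := rayleigh' (G.adjMatrix ℝ) hAherm lam hlam.2 (fun k => Real.sqrt (d k))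
    have e1 : (fun k => Real.sqrt (d k)) ⬝ᵥ ((G.adjMatrix ℝ) *ᵥ (fun k => Real.sqrt (d k)))
        = ∑ k, ∑ j ∈ G.neighborFinset k, Real.sqrt (d k * d j) := by
      rw [dotProduct]
      refine Finset.sum_congr rfl fun k _ => ?_
      rw [SimpleGraph.adjMatrix_mulVec_apply, Finset.mul_sum]
      refine Finset.sum_congr rfl fun j _ => ?_
      rw [← Real.sqrt_mul (by positivity)]
    have e2 : (fun k => Real.sqrt (d k)) ⬝ᵥ (fun k => Real.sqrt (d k))
        = 2 * (G.edgeFinset.card : ℝ) := by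
      rw [dotProduct]
      have : ∀ k : V, Real.sqrt (d k) * Real.sqrt (d k) = d k := fun k =>
        Real.mul_self_sqrt (by positivity)
      rw [Finset.sum_congr rfl fun k _ => this k, hd, ← Nat.cast_sum,
        G.sum_degrees_eq_twice_card_edges]
      push_cast
      ring
    rw [e1, e2] at hray
    exact hray
  -- Cauchy-Schwarz over pairs
  have hCS2 : lam ^ 2 ≤ U * (∑ k, ∑ j ∈ G.neighborFinset k, Real.sqrt (d k * d j)) := by
    have := Finset.sum_sq_le_sum_mul_sum_of_sq_eq_mul E'
      (r := fun q => x q.1 * x q.2)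
      (f := fun q => x q.1 ^ 2 * x q.2 ^ 2 / Real.sqrt (d q.1 * d q.2))
      (g := fun q => Real.sqrt (d q.1 * d q.2))
      (fun q _ => div_nonneg (by positivity) (Real.sqrt_nonneg _))
      (fun q _ => Real.sqrt_nonneg _)
      (fun q hq => by
        have hadj : G.Adj q.1 q.2 := by
          rw [hE'] at hq; exact (Finset.mem_filter.mp hq).2
        have h1 : (1:ℝ) ≤ d q.1 := hdeg hadj
        have h2 : (1:ℝ) ≤ d q.2 := hdeg hadj.symm
        have hs : (0:ℝ) < Real.sqrt (d q.1 * d q.2) := Real.sqrt_pos.mpr (by nlinarith)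
        rw [mul_pow, div_mul_cancel₀ _ (ne_of_gt hs)])
    rw [hpair (fun k j => x k * x j), hL,
      hpair (fun k j => x k ^ 2 * x j ^ 2 / Real.sqrt (d k * d j)),
      hpair (fun k j => Real.sqrt (d k * d j))] at this
    exact this
  -- combine
  rw [hS, div_le_iff₀ hm']
  have hWU : U * (∑ k, ∑ j ∈ G.neighborFinset k, Real.sqrt (d k * d j))
      ≤ U * (lam * (2 * (G.edgeFinset.card : ℝ))) := mul_le_mul_of_nonneg_left hW hU0
  have hfin1 : lam ^ 2 ≤ U * (lam * (2 * (G.edgeFinset.card : ℝ))) := le_trans hCS2 hWU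
  have hfin2 : lam ^ 2 * U ≤ ∑ k, y k ^ 2 := le_trans (by nlinarith) hT
  nlinarith [mul_le_mul_of_nonneg_left hfin1 hl.le,
    mul_le_mul_of_nonneg_right hfin2 hm'.le]
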